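/- arXiv:1503.08418 — 5 statements merged into one kernel-verified Lean document; each statement's English description precedes it below -/
import Mathlib

section
/- For all n ≥ 0, the degenerate poly-Bernoulli polynomials of index k = 2 satisfy β_n^{(2)}(x|λ) = Σ_{l=0}^{n} C(n,l) (B_l/(l+1)) β_{n−l}(x|λ), where B_l = B_l(0) are the Bernoulli numbers. -/
open Finset

/-- The generalized falling factorial `(x|λ)ₙ = x(x−λ)(x−2λ)⋯(x−(n−1)λ)`. -/
noncomputable def genFall (lam x : ℂ) (n : ℕ) : ℂ :=
  ∏ i ∈ Finset.range n, (x - (i : ℂ) * lam)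

/-- The formal power series `(1+λt)^{x/λ} = Σ_{n≥0} (x|λ)ₙ tⁿ/n!`. -/
noncomputable def degExp (lam x : ℂ) : PowerSeries ℂ :=
  PowerSeries.mk fun n => genFall lam x n / (n.factorial : ℂ)

/-- The formal power series `1 - e^{-t}`. -/
noncomputable def oneSubExpNeg : PowerSeries ℂ :=
  PowerSeries.mk fun n => if n = 0 then 0 else -((-1 : ℂ) ^ n) / (n.factorial : ℂ)

/-- The formal power series `Li_k(1 - e^{-t}) = Σ_{n≥1} (1-e^{-t})ⁿ/nᵏ`; since
`(1-e^{-t})ⁿ` has order at least `n`, the coefficient of `tˡ` only involves `n ≤ l`. -/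
noncomputable def polyLogComp (k : ℤ) : PowerSeries ℂ :=
  PowerSeries.mk fun l =>
    ∑ n ∈ Finset.Icc 1 l, ((n : ℂ) ^ k)⁻¹ * PowerSeries.coeff l (oneSubExpNeg ^ n)

/-- Stirling numbers of the second kind `S₂(n, k)`. -/
def S2 : ℕ → ℕ → ℕ
  | 0, 0 => 1
  | 0, _ + 1 => 0
  | _ + 1, 0 => 0
  | n + 1, k + 1 => (k + 1) * S2 n (k + 1) + S2 n k

section Aux
open PowerSeries

local notation "u" => oneSubExpNeg
local notation "E" => PowerSeries.exp ℂ
local notation "En" => PowerSeries.rescale (-1 : ℂ) (PowerSeries.exp ℂ)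

lemma u_eq : u = 1 - En := by
  ext l
  simp only [oneSubExpNeg, coeff_mk, map_sub, coeff_rescale, coeff_exp, map_one,
    PowerSeries.coeff_one]
  rcases eq_or_ne l 0 with h | h
  · simp [h]
  · simp only [h, if_false]
    have h2 : ((l.factorial : ℂ)) ≠ 0 := Nat.cast_ne_zero.mpr (Nat.factorial_ne_zero _)
    rw [eq_comm, sub_eq_iff_eq_add]
    rw [show ((algebraMap ℚ ℂ) (1 / l.factorial) : ℂ) = 1 / l.factorial by push_cast; ring]
    field_simp
    ring

lemma hDu : d⁄dX ℂ u = En := by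
  ext l
  rw [PowerSeries.coeff_derivative]
  simp only [oneSubExpNeg, coeff_mk, coeff_rescale, coeff_exp, Nat.succ_ne_zero, if_false,
    Nat.factorial_succ]
  have h1 : ((l+1).factorial : ℂ) ≠ 0 := Nat.cast_ne_zero.mpr (Nat.factorial_ne_zero _)
  have h2 : ((l.factorial : ℂ)) ≠ 0 := Nat.cast_ne_zero.mpr (Nat.factorial_ne_zero _)
  rw [show ((algebraMap ℚ ℂ) (1 / l.factorial) : ℂ) = 1 / l.factorial by push_cast; ring]
  push_cast at h1 ⊢
  have h3 : ((l:ℂ) + 1) * l.factorial ≠ 0 := by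
    intro hc; apply h1; rw [Nat.factorial_succ]; push_cast; linear_combination hc
  field_simp
  ring

lemma coeff_u_pow_zero {n l : ℕ} (h : l < n) : PowerSeries.coeff l (u ^ n) = 0 := by
  have hu : (PowerSeries.X : ℂ⟦X⟧) ∣ u := by
    rw [PowerSeries.X_dvd_iff]; simp [oneSubExpNeg]
  have : (PowerSeries.X : ℂ⟦X⟧) ^ n ∣ u ^ n := pow_dvd_pow_of_dvd hu n
  exact (PowerSeries.X_pow_dvd_iff.mp this) l h

noncomputable def T (k : ℤ) (N : ℕ) : ℂ⟦X⟧ :=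
  ∑ n ∈ Finset.Icc 1 N, PowerSeries.C ((n : ℂ) ^ k)⁻¹ * u ^ n

lemma coeff_T_eq {k : ℤ} {l N : ℕ} (h : l ≤ N) :
    PowerSeries.coeff l (polyLogComp k) = PowerSeries.coeff l (T k N) := by
  rw [polyLogComp, coeff_mk, T, map_sum]
  rw [Finset.sum_subset (Finset.Icc_subset_Icc_right h)]
  · exact Finset.sum_congr rfl fun n _ => by rw [PowerSeries.coeff_C_mul]
  · intro n hn hn2
    simp only [Finset.mem_Icc] at hn hn2
    rw [coeff_u_pow_zero (by omega), mul_zero]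

lemma deriv_T (k : ℤ) (N : ℕ) :
    u * (d⁄dX ℂ (T k N)) = (d⁄dX ℂ u) * T (k-1) N := by
  rw [T, T, map_sum, Finset.mul_sum, Finset.mul_sum]
  apply Finset.sum_congr rfl
  intro n hn
  have hn1 : 1 ≤ n := (Finset.mem_Icc.mp hn).1
  have hnC : (n : ℂ) ≠ 0 := Nat.cast_ne_zero.mpr (by omega)
  have hzp : ((n : ℂ) ^ (k-1))⁻¹ = ((n : ℂ) ^ k)⁻¹ * n := by
    rw [zpow_sub₀ hnC, zpow_one, div_eq_mul_inv, mul_inv, inv_inv]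
  have hDpow : d⁄dX ℂ (u ^ n) = (n : ℂ⟦X⟧) * u ^ (n-1) * d⁄dX ℂ u := by
    rw [Derivation.leibniz_pow, smul_eq_mul, nsmul_eq_mul]
    ring
  have hC : d⁄dX ℂ (PowerSeries.C ((n : ℂ) ^ k)⁻¹) = 0 := PowerSeries.derivative_C
  rw [Derivation.leibniz, hC, smul_zero, add_zero, smul_eq_mul, hDpow, hzp]
  have hpow : u * u ^ (n - 1) = u ^ n := by
    rw [← pow_succ']
    congr 1
    omega
  rw [map_mul, ← hpow, ← map_natCast (PowerSeries.C : ℂ →+* ℂ⟦X⟧) n]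
  ring

lemma deriv_polyLog (k : ℤ) :
    u * d⁄dX ℂ (polyLogComp k) = d⁄dX ℂ u * polyLogComp (k-1) := by
  ext l
  rw [PowerSeries.coeff_mul, PowerSeries.coeff_mul]
  have hL : ∀ p ∈ Finset.HasAntidiagonal.antidiagonal l,
      (PowerSeries.coeff p.1) u * (PowerSeries.coeff p.2) (d⁄dX ℂ (polyLogComp k))
      = (PowerSeries.coeff p.1) u * (PowerSeries.coeff p.2) (d⁄dX ℂ (T k (l+1))) := by
    intro p hp
    have h2 : p.2 ≤ l := Finset.HasAntidiagonal.antidiagonal.snd_le hp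
    rw [PowerSeries.coeff_derivative, PowerSeries.coeff_derivative,
      coeff_T_eq (show p.2 + 1 ≤ l + 1 by omega)]
  have hR : ∀ p ∈ Finset.HasAntidiagonal.antidiagonal l,
      (PowerSeries.coeff p.1) (d⁄dX ℂ u) * (PowerSeries.coeff p.2) (polyLogComp (k-1))
      = (PowerSeries.coeff p.1) (d⁄dX ℂ u) * (PowerSeries.coeff p.2) (T (k-1) (l+1)) := by
    intro p hp
    have h2 : p.2 ≤ l := Finset.HasAntidiagonal.antidiagonal.snd_le hp
    rw [coeff_T_eq (show p.2 ≤ l + 1 by omega)]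
  rw [Finset.sum_congr rfl hL, Finset.sum_congr rfl hR, ← PowerSeries.coeff_mul,
    ← PowerSeries.coeff_mul, deriv_T]

lemma geomT (N : ℕ) : (1 - u) * T 0 N = u - u ^ (N + 1) := by
  induction N with
  | zero => simp [T]
  | succ N ih =>
    rw [T, Finset.sum_Icc_succ_top (by omega)]
    rw [T] at ih
    have : ((((N+1 : ℕ)) : ℂ) ^ (0:ℤ))⁻¹ = 1 := by simp
    rw [this, map_one, one_mul, mul_add, ih]
    ring

lemma hDu' : d⁄dX ℂ u = 1 - u := by
  rw [hDu, u_eq]; ring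

lemma u_ne : u ≠ 0 := by
  intro h
  have := congrArg (PowerSeries.coeff 1) h
  simp [oneSubExpNeg] at this

lemma constCoeff_polyLog (k : ℤ) : PowerSeries.constantCoeff (polyLogComp k) = 0 := by
  rw [← PowerSeries.coeff_zero_eq_constantCoeff_apply, polyLogComp, coeff_mk]
  simp

lemma Du_polyLog_zero : d⁄dX ℂ u * polyLogComp 0 = u := by
  rw [hDu']
  ext l
  rw [PowerSeries.coeff_mul]
  have hR : ∀ p ∈ Finset.HasAntidiagonal.antidiagonal l,
      (PowerSeries.coeff p.1) (1 - u) * (PowerSeries.coeff p.2) (polyLogComp 0)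
      = (PowerSeries.coeff p.1) (1 - u) * (PowerSeries.coeff p.2) (T 0 l) := by
    intro p hp
    rw [coeff_T_eq (Finset.HasAntidiagonal.antidiagonal.snd_le hp)]
  rw [Finset.sum_congr rfl hR, ← PowerSeries.coeff_mul, geomT, map_sub,
    coeff_u_pow_zero (by omega), sub_zero]

lemma polyLog_one : polyLogComp 1 = PowerSeries.X := by
  have h := deriv_polyLog 1
  rw [show (1:ℤ) - 1 = 0 from rfl, Du_polyLog_zero] at h
  have hD : d⁄dX ℂ (polyLogComp 1) = 1 := by
    have := mul_left_cancel₀ u_ne (h.trans (mul_one u).symm)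
    exact this
  apply PowerSeries.derivative.ext
  · rw [hD, PowerSeries.derivative_X]
  · rw [constCoeff_polyLog]
    simp

noncomputable def Bser : ℂ⟦X⟧ :=
  PowerSeries.mk fun l => ((bernoulli l : ℚ) : ℂ) / ((l : ℂ) + 1) / (l.factorial : ℂ)

lemma exp_sub_one_ne : (PowerSeries.exp ℂ) - 1 ≠ 0 := by
  intro h
  have := congrArg (PowerSeries.coeff 1) h
  simp [PowerSeries.coeff_exp, PowerSeries.coeff_one] at this

lemma deriv_polyLog_two : d⁄dX ℂ (polyLogComp 2) = bernoulliPowerSeries ℂ := by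
  have h := deriv_polyLog 2
  rw [show (2:ℤ) - 1 = 1 from rfl, polyLog_one, hDu, u_eq] at h
  -- h : (1 - En) * D P2 = En * X
  have h2 := congrArg (fun f => PowerSeries.exp ℂ * f) h
  have hEEn : PowerSeries.exp ℂ * PowerSeries.rescale (-1 : ℂ) (PowerSeries.exp ℂ) = 1 :=
    PowerSeries.exp_mul_exp_neg_eq_one
  have hL : PowerSeries.exp ℂ * ((1 - PowerSeries.rescale (-1 : ℂ) (PowerSeries.exp ℂ)) *
      d⁄dX ℂ (polyLogComp 2)) = (PowerSeries.exp ℂ - 1) * d⁄dX ℂ (polyLogComp 2) := by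
    rw [show PowerSeries.exp ℂ * ((1 - PowerSeries.rescale (-1 : ℂ) (PowerSeries.exp ℂ)) *
      d⁄dX ℂ (polyLogComp 2)) = (PowerSeries.exp ℂ -
      PowerSeries.exp ℂ * PowerSeries.rescale (-1 : ℂ) (PowerSeries.exp ℂ)) *
      d⁄dX ℂ (polyLogComp 2) by ring, hEEn]
  have hR : PowerSeries.exp ℂ * (PowerSeries.rescale (-1 : ℂ) (PowerSeries.exp ℂ) *
      PowerSeries.X) = PowerSeries.X := by
    rw [← mul_assoc, hEEn, one_mul]
  rw [hL, hR] at h2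
  have hB := bernoulliPowerSeries_mul_exp_sub_one ℂ
  have : (PowerSeries.exp ℂ - 1) * d⁄dX ℂ (polyLogComp 2)
      = (PowerSeries.exp ℂ - 1) * bernoulliPowerSeries ℂ := by
    rw [h2, ← hB]; ring
  exact mul_left_cancel₀ exp_sub_one_ne this

lemma polyLog_two : polyLogComp 2 = Bser * PowerSeries.X := by
  apply PowerSeries.derivative.ext
  · rw [deriv_polyLog_two]
    ext l
    rw [PowerSeries.coeff_derivative, PowerSeries.coeff_succ_mul_X]
    simp only [Bser, coeff_mk, bernoulliPowerSeries, PowerSeries.coeff_mk]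
    have h1 : ((l : ℂ) + 1) ≠ 0 := by
      have := Nat.cast_ne_zero (R := ℂ).mpr (Nat.succ_ne_zero l)
      push_cast at this
      exact this
    have h2 : ((l.factorial : ℂ)) ≠ 0 := Nat.cast_ne_zero.mpr (Nat.factorial_ne_zero _)
    rw [show ((algebraMap ℚ ℂ) ((bernoulli l) / l.factorial) : ℂ)
      = ((bernoulli l : ℚ) : ℂ) / l.factorial by rw [eq_ratCast, Rat.cast_div]; norm_cast]
    field_simp
  · rw [constCoeff_polyLog]
    simp


end Aux

/-- `βₙ⁽²⁾(x|λ) = Σ_{l=0}^{n} C(n,l) (B_l/(l+1)) β_{n−l}(x|λ)`, where `B_l`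
are the Bernoulli numbers. -/
theorem degenerate_poly_bernoulli_two_formula (lam : ℂ) (β2 β : ℕ → ℂ → ℂ)
    (hβ2 : ∀ x : ℂ,
      (PowerSeries.mk fun n => β2 n x / (n.factorial : ℂ)) * (degExp lam 1 - 1)
        = polyLogComp 2 * degExp lam x)
    (hβ : ∀ x : ℂ,
      (PowerSeries.mk fun n => β n x / (n.factorial : ℂ)) * (degExp lam 1 - 1)
        = PowerSeries.X * degExp lam x)
    (n : ℕ) (x : ℂ) :
    β2 n x = ∑ l ∈ Finset.range (n + 1),
      (n.choose l : ℂ) * (((bernoulli l : ℚ) : ℂ) / ((l : ℂ) + 1)) * β (n - l) x := by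
  have hE : degExp lam 1 - 1 ≠ 0 := by
    intro h
    have := congrArg (PowerSeries.coeff 1) h
    simp [degExp, genFall, PowerSeries.coeff_one] at this
  have key : (PowerSeries.mk fun n => β2 n x / (n.factorial : ℂ))
      = Bser * PowerSeries.mk fun n => β n x / (n.factorial : ℂ) := by
    apply mul_right_cancel₀ hE
    rw [hβ2 x, polyLog_two, mul_assoc, mul_assoc, ← hβ x]
  have hc := congrArg (PowerSeries.coeff n) key
  rw [PowerSeries.coeff_mk, PowerSeries.coeff_mul,
    Finset.Nat.sum_antidiagonal_eq_sum_range_succ_mk] at hc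
  simp only [Bser, PowerSeries.coeff_mk] at hc
  have hn : ((n.factorial : ℂ)) ≠ 0 := Nat.cast_ne_zero.mpr (Nat.factorial_ne_zero _)
  have : β2 n x = (∑ l ∈ Finset.range (n + 1),
      ((bernoulli l : ℚ) : ℂ) / ((l : ℂ) + 1) / (l.factorial : ℂ)
        * (β (n - l) x / (((n - l).factorial : ℂ)))) * (n.factorial : ℂ) :=
    (div_eq_iff hn).mp hc
  rw [this, Finset.sum_mul]
  apply Finset.sum_congr rfl
  intro l hl
  have hln : l ≤ n := by
    have := Finset.mem_range.mp hl; omega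
  rw [Nat.cast_choose ℂ hln]
  have h1 : ((l.factorial : ℂ)) ≠ 0 := Nat.cast_ne_zero.mpr (Nat.factorial_ne_zero _)
  have h2 : (((n - l).factorial : ℂ)) ≠ 0 := Nat.cast_ne_zero.mpr (Nat.factorial_ne_zero _)
  field_simp
end

section
/- For all n ≥ 0 and k ∈ ℤ, β_n^{(k)}(x|λ) = Σ_{l=0}^{n} C(n,l) ( Σ_{p=1}^{l+1} ((−1)^{p+l+1} p!/p^k) · S_2(l+1,p)/(l+1) ) β_{n−l}(x|λ), expressing the degenerate poly-Bernoulli polynomials in terms of the degenerate Bernoulli polynomials and Stirling numbers of the second kind. -/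
open Finset

lemma deriv_oneSubExpNeg :
    (PowerSeries.derivative ℂ) oneSubExpNeg = 1 - oneSubExpNeg := by
  ext n
  rw [PowerSeries.coeff_derivative]
  simp only [oneSubExpNeg, PowerSeries.coeff_mk, map_sub, PowerSeries.coeff_one,
    Nat.succ_ne_zero, if_false]
  split_ifs with h
  · subst h; norm_num
  · have h1 : ((n+1).factorial : ℂ) = ((n:ℂ)+1) * (n.factorial : ℂ) := by
      push_cast [Nat.factorial_succ]; ring
    have h2 : ((n.factorial : ℂ)) ≠ 0 := Nat.cast_ne_zero.mpr (Nat.factorial_ne_zero n)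
    have h3 : ((n:ℂ)+1) ≠ 0 := Nat.cast_add_one_ne_zero n
    rw [h1, pow_succ]
    field_simp
    ring

lemma coeff_pow_oneSubExpNeg (p m : ℕ) :
    PowerSeries.coeff m (oneSubExpNeg ^ p)
      = (-1 : ℂ) ^ (m + p) * (p.factorial : ℂ) * (S2 m p : ℂ) / (m.factorial : ℂ) := by
  induction p generalizing m with
  | zero =>
    rcases m with _ | m <;> simp [S2, PowerSeries.coeff_one]
  | succ p ih =>
    induction m with
    | zero =>
      have h0 : PowerSeries.constantCoeff oneSubExpNeg = 0 := by simp [oneSubExpNeg]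
      have : PowerSeries.constantCoeff (oneSubExpNeg ^ (p+1)) = 0 := by
        rw [map_pow, h0, zero_pow]; omega
      simpa [S2] using this
    | succ m ihm =>
      have hd : (PowerSeries.derivative ℂ) (oneSubExpNeg ^ (p+1))
          = PowerSeries.C ((p:ℂ)+1) * (oneSubExpNeg ^ p - oneSubExpNeg ^ (p+1)) := by
        rw [Derivation.leibniz_pow, deriv_oneSubExpNeg]
        simp only [Nat.add_sub_cancel, smul_eq_mul, nsmul_eq_mul]
        rw [show ((p+1:ℕ) : PowerSeries ℂ) = PowerSeries.C ((p:ℂ)+1) by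
          rw [← map_natCast PowerSeries.C (p+1)]; norm_cast]
        ring
      have hc := congrArg (PowerSeries.coeff m) hd
      rw [PowerSeries.coeff_derivative, PowerSeries.coeff_C_mul, map_sub, ih m, ihm] at hc
      have hm1 : ((m:ℂ)+1) ≠ 0 := Nat.cast_add_one_ne_zero m
      apply mul_right_cancel₀ hm1
      rw [show ((m:ℕ):ℂ) + 1 = (((m+1:ℕ)):ℂ) by push_cast; ring] at hc ⊢
      rw [hc]
      have hrec : (S2 (m+1) (p+1) : ℂ) = ((p:ℂ)+1) * (S2 m (p+1) : ℂ) + (S2 m p : ℂ) := by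
        have : S2 (m+1) (p+1) = (p + 1) * S2 m (p+1) + S2 m p := rfl
        rw [this]; push_cast; ring
      have hmf : ((m+1).factorial : ℂ) = ((m+1:ℕ):ℂ) * (m.factorial : ℂ) := by
        rw [Nat.factorial_succ]; push_cast; ring
      have hpf : ((p+1).factorial : ℂ) = ((p:ℂ)+1) * (p.factorial : ℂ) := by
        rw [Nat.factorial_succ]; push_cast; ring
      have hmne : ((m.factorial : ℂ)) ≠ 0 := Nat.cast_ne_zero.mpr (Nat.factorial_ne_zero m)
      have hm1' : ((m+1:ℕ):ℂ) ≠ 0 := Nat.cast_ne_zero.mpr (by omega)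
      rw [hrec, hmf, hpf, show m+(p+1) = (m+p)+1 from by ring,
        show m+1+(p+1) = (m+p)+1+1 from by ring, pow_succ, pow_succ, pow_succ]
      field_simp
      ring

/-- The series `Li_k(1-e^{-t})/t`. -/
noncomputable def Dser (k : ℤ) : PowerSeries ℂ :=
  PowerSeries.mk fun l =>
    (∑ p ∈ Finset.Icc 1 (l + 1),
      (-1 : ℂ) ^ (p + l + 1) * (p.factorial : ℂ) / (p : ℂ) ^ k
        * (S2 (l + 1) p : ℂ) / ((l : ℂ) + 1)) / (l.factorial : ℂ)

lemma polyLogComp_eq (k : ℤ) : polyLogComp k = PowerSeries.X * Dser k := by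
  ext m
  rcases m with _ | l
  · simp [polyLogComp]
  · rw [PowerSeries.coeff_succ_X_mul]
    simp only [polyLogComp, Dser, PowerSeries.coeff_mk, Finset.sum_div]
    refine Finset.sum_congr rfl fun p hp => ?_
    have hp1 : 1 ≤ p := (Finset.mem_Icc.mp hp).1
    have hpne : ((p:ℂ)) ≠ 0 := Nat.cast_ne_zero.mpr (by omega)
    have hpk : ((p:ℂ)) ^ k ≠ 0 := zpow_ne_zero k hpne
    have hlf : ((l.factorial : ℂ)) ≠ 0 := Nat.cast_ne_zero.mpr (Nat.factorial_ne_zero l)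
    have hl1 : ((l:ℂ)+1) ≠ 0 := Nat.cast_add_one_ne_zero l
    rw [coeff_pow_oneSubExpNeg, show l+1+p = p+l+1 from by ring]
    have hlf1 : (((l+1).factorial : ℂ)) = ((l:ℂ)+1) * (l.factorial : ℂ) := by
      rw [Nat.factorial_succ]; push_cast; ring
    rw [hlf1]
    simp only [div_eq_mul_inv, mul_inv]
    ring

/-- `βₙ⁽ᵏ⁾(x|λ) = Σ_{l=0}^{n} C(n,l) (Σ_{p=1}^{l+1}
((−1)^{p+l+1} p!/pᵏ)·S₂(l+1,p)/(l+1)) β_{n−l}(x|λ)`. -/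
theorem degenerate_poly_bernoulli_in_terms_of_degenerate_bernoulli (k : ℤ) (lam : ℂ)
    (βk β : ℕ → ℂ → ℂ)
    (hβk : ∀ x : ℂ,
      (PowerSeries.mk fun n => βk n x / (n.factorial : ℂ)) * (degExp lam 1 - 1)
        = polyLogComp k * degExp lam x)
    (hβ : ∀ x : ℂ,
      (PowerSeries.mk fun n => β n x / (n.factorial : ℂ)) * (degExp lam 1 - 1)
        = PowerSeries.X * degExp lam x)
    (n : ℕ) (x : ℂ) :
    βk n x = ∑ l ∈ Finset.range (n + 1), (n.choose l : ℂ) *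
      (∑ p ∈ Finset.Icc 1 (l + 1),
        (-1 : ℂ) ^ (p + l + 1) * (p.factorial : ℂ) / (p : ℂ) ^ k
          * (S2 (l + 1) p : ℂ) / ((l : ℂ) + 1)) * β (n - l) x := by
  have hEne : degExp lam 1 - 1 ≠ 0 := by
    intro h
    have := congrArg (PowerSeries.coeff 1) h
    simp [degExp, genFall, PowerSeries.coeff_one] at this
  have haux : (Dser k * PowerSeries.mk fun n => β n x / (n.factorial : ℂ))
      * (degExp lam 1 - 1) = Dser k * (PowerSeries.X * degExp lam x) := by
    rw [mul_assoc, hβ x]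
  have key : (PowerSeries.mk fun n => βk n x / (n.factorial : ℂ)) * (degExp lam 1 - 1)
      = (Dser k * PowerSeries.mk fun n => β n x / (n.factorial : ℂ)) * (degExp lam 1 - 1) := by
    rw [hβk, polyLogComp_eq, haux]
    ring
  have hser := mul_right_cancel₀ hEne key
  have hco := congrArg (PowerSeries.coeff n) hser
  rw [PowerSeries.coeff_mk, PowerSeries.coeff_mul,
    Finset.Nat.sum_antidiagonal_eq_sum_range_succ_mk] at hco
  simp only [Dser, PowerSeries.coeff_mk] at hco
  have hnf : ((n.factorial : ℂ)) ≠ 0 := Nat.cast_ne_zero.mpr (Nat.factorial_ne_zero n)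
  have : βk n x = (n.factorial : ℂ) * ((βk n x) / (n.factorial : ℂ)) := by
    field_simp
  rw [this, hco, Finset.mul_sum]
  refine Finset.sum_congr rfl fun l hl => ?_
  have hln : l ≤ n := by
    have := Finset.mem_range.mp hl; omega
  have hfact : ((n.factorial : ℂ))
      = (n.choose l : ℂ) * (l.factorial : ℂ) * ((n-l).factorial : ℂ) := by
    rw [← Nat.choose_mul_factorial_mul_factorial hln]; push_cast; ring
  have hlf : ((l.factorial : ℂ)) ≠ 0 := Nat.cast_ne_zero.mpr (Nat.factorial_ne_zero l)
  have hnlf : (((n-l).factorial : ℂ)) ≠ 0 := Nat.cast_ne_zero.mpr (Nat.factorial_ne_zero _)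
  rw [hfact]
  set S := (∑ p ∈ Finset.Icc 1 (l + 1),
    (-1 : ℂ) ^ (p + l + 1) * (p.factorial : ℂ) / (p : ℂ) ^ k
      * (S2 (l + 1) p : ℂ) / ((l : ℂ) + 1)) with hS
  clear_value S
  field_simp
end

section
/- As formal power series in t, one has (1+λt)^{x/λ} · Li_k(1−e^{−t}) = Σ_{n≥1} ( Σ_{p=1}^{n} ( Σ_{m=0}^{p−1} ((−1)^{m+p+1}/(m+1)^k) (m+1)! S_2(p,m+1) ) C(n,p) (x|λ)_{n−p} ) t^n/n!. -/
open Finset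

lemma sum_Icc_one (n : ℕ) (f : ℕ → ℂ) : ∑ i ∈ Icc 1 n, f i = ∑ i ∈ range n, f (i+1) := by
  induction n with
  | zero => simp
  | succ n ih => rw [Finset.sum_Icc_succ_top (by omega), ih, Finset.sum_range_succ]

lemma key (p : ℕ) : ∀ j, (j+1) * S2 p (j+1) = ∑ i ∈ range p, p.choose i * S2 i j := by
  induction p with
  | zero => intro j; simp [S2]
  | succ p ih =>
    intro j
    have hsplit : ∑ i ∈ range (p+1), (p+1).choose i * S2 i j
        = S2 0 j + ∑ i ∈ range p, ((p.choose i + p.choose (i+1)) * S2 (i+1) j) := by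
      rw [Finset.sum_range_succ']
      simp [Nat.choose_succ_succ, add_comm]
    have hB : S2 0 j + ∑ i ∈ range p, p.choose (i+1) * S2 (i+1) j
        = (j+1) * S2 p (j+1) + S2 p j := by
      have : ∑ i ∈ range (p+1), p.choose i * S2 i j
          = S2 0 j + ∑ i ∈ range p, p.choose (i+1) * S2 (i+1) j := by
        rw [Finset.sum_range_succ']; simp [add_comm]
      rw [← this, Finset.sum_range_succ, ← ih j, Nat.choose_self, one_mul]
    have hdist : ∑ i ∈ range p, ((p.choose i + p.choose (i+1)) * S2 (i+1) j)
        = (∑ i ∈ range p, p.choose i * S2 (i+1) j)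
          + ∑ i ∈ range p, p.choose (i+1) * S2 (i+1) j := by
      rw [← Finset.sum_add_distrib]
      exact Finset.sum_congr rfl fun i _ => by ring
    rw [hsplit, hdist]
    rcases j with _ | j'
    · have hA : ∑ i ∈ range p, p.choose i * S2 (i+1) 0 = 0 := by
        apply Finset.sum_eq_zero; intro i _; simp [S2]
      have := hB
      simp only [S2] at *
      omega
    · have hA : ∑ i ∈ range p, p.choose i * S2 (i+1) (j'+1)
          = (j'+1) * ((j'+2) * S2 p (j'+2)) + (j'+1) * S2 p (j'+1) := by
        have e1 : ∑ i ∈ range p, p.choose i * S2 (i+1) (j'+1)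
            = (j'+1) * (∑ i ∈ range p, p.choose i * S2 i (j'+1))
              + ∑ i ∈ range p, p.choose i * S2 i j' := by
          rw [Finset.mul_sum, ← Finset.sum_add_distrib]
          exact Finset.sum_congr rfl fun i _ => by simp only [S2]; ring
        rw [e1, ← ih (j'+1), ← ih j']
      rw [hA]
      have hB' : ∑ i ∈ range p, p.choose (i+1) * S2 (i+1) (j'+1)
          = (j'+1+1) * S2 p (j'+1+1) + S2 p (j'+1) := by
        have := hB
        simpa [S2] using this
      rw [hB']
      simp only [S2]
      ring
  
lemma pow_formula (j : ℕ) : oneSubExpNeg ^ j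
    = PowerSeries.mk (fun p => (-1 : ℂ) ^ (p+j) * (j.factorial : ℂ) * (S2 p j : ℂ) / (p.factorial : ℂ)) := by
  induction j with
  | zero =>
    ext p
    rcases p with _ | p
    · simp [S2]
    · simp [S2, PowerSeries.coeff_one]
  | succ j ih =>
    ext p
    rw [pow_succ, ih, PowerSeries.coeff_mul,
      Finset.Nat.sum_antidiagonal_eq_sum_range_succ_mk, Finset.sum_range_succ]
    simp only [PowerSeries.coeff_mk, oneSubExpNeg, Nat.sub_self, if_pos rfl, mul_zero, add_zero]
    have step : ∀ i ∈ range p,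
        (-1 : ℂ) ^ (i+j) * (j.factorial : ℂ) * (S2 i j : ℂ) / (i.factorial : ℂ) *
          (if p - i = 0 then 0 else -((-1 : ℂ) ^ (p-i)) / ((p-i).factorial : ℂ))
        = (-1 : ℂ) ^ (p+j+1) * (j.factorial : ℂ) *
            ((S2 i j : ℂ) / ((i.factorial : ℂ) * ((p-i).factorial : ℂ))) := by
      intro i hi
      rw [Finset.mem_range] at hi
      rw [if_neg (by omega)]
      have hpow : (-1 : ℂ) ^ (i+j) * (-(-1 : ℂ) ^ (p-i)) = (-1 : ℂ) ^ (p+j+1) := by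
        rw [mul_neg, ← pow_add, show i + j + (p - i) = p + j from by omega, pow_succ]
        ring
      rw [← hpow]
      ring
    rw [Finset.sum_congr rfl step, ← Finset.mul_sum]
    have hkey : ∑ i ∈ range p, (S2 i j : ℂ) / ((i.factorial : ℂ) * ((p-i).factorial : ℂ))
        = ((j+1 : ℕ) : ℂ) * (S2 p (j+1) : ℂ) / (p.factorial : ℂ) := by
      have h1 : ∀ i ∈ range p, (S2 i j : ℂ) / ((i.factorial : ℂ) * ((p-i).factorial : ℂ))
          = (p.choose i : ℂ) * (S2 i j : ℂ) / (p.factorial : ℂ) := by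
        intro i hi
        rw [Finset.mem_range] at hi
        rw [Nat.cast_choose ℂ (le_of_lt hi)]
        have h2 : ((i.factorial : ℂ)) ≠ 0 := Nat.cast_ne_zero.2 (Nat.factorial_ne_zero i)
        have h3 : (((p-i).factorial : ℂ)) ≠ 0 := Nat.cast_ne_zero.2 (Nat.factorial_ne_zero _)
        have h4 : ((p.factorial : ℂ)) ≠ 0 := Nat.cast_ne_zero.2 (Nat.factorial_ne_zero p)
        field_simp
      rw [Finset.sum_congr rfl h1, ← Finset.sum_div]
      congr 1
      exact_mod_cast (key p j).symm
    rw [hkey]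
    rw [show p + (j+1) = p+j+1 from by omega, Nat.factorial_succ]
    push_cast
    ring

/-- `(1+λt)^{x/λ} · Li_k(1−e^{−t}) = Σ_{n≥1} (Σ_{p=1}^{n}
(Σ_{m=0}^{p−1} ((−1)^{m+p+1}/(m+1)ᵏ)(m+1)! S₂(p,m+1)) C(n,p) (x|λ)_{n−p}) tⁿ/n!`
(the coefficient at `n = 0` vanishes since the inner sum over `p ∈ [1,0]` is empty). -/
theorem degExp_mul_polyLog_eq (k : ℤ) (lam x : ℂ) :
    degExp lam x * polyLogComp k = PowerSeries.mk (fun n =>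
      (∑ p ∈ Finset.Icc 1 n,
        (∑ m ∈ Finset.range p,
          (-1 : ℂ) ^ (m + p + 1) / ((m + 1 : ℕ) : ℂ) ^ k * ((m + 1).factorial : ℂ)
            * (S2 p (m + 1) : ℂ))
          * (n.choose p : ℂ) * genFall lam x (n - p)) / (n.factorial : ℂ)) := by
  ext n
  rw [PowerSeries.coeff_mk, mul_comm, PowerSeries.coeff_mul,
    Finset.Nat.sum_antidiagonal_eq_sum_range_succ_mk, Finset.sum_range_succ']
  simp only [polyLogComp, degExp, PowerSeries.coeff_mk, pow_formula]
  rw [show (∑ q ∈ Icc 1 (0:ℕ), ((q : ℂ) ^ k)⁻¹ *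
      ((-1 : ℂ) ^ (0+q) * (q.factorial : ℂ) * (S2 0 q : ℂ) / ((0:ℕ).factorial : ℂ))) *
      (genFall lam x (n - 0) / ((n - 0).factorial : ℂ)) = 0 from by simp,
    add_zero, sum_Icc_one, Finset.sum_div]
  refine Finset.sum_congr rfl fun i hi => ?_
  rw [Finset.mem_range] at hi
  have hle : i + 1 ≤ n := hi
  rw [sum_Icc_one]
  have hinner : ∀ m ∈ range (i+1),
      (((m+1 : ℕ) : ℂ) ^ k)⁻¹ *
        ((-1 : ℂ) ^ ((i+1)+(m+1)) * ((m+1).factorial : ℂ) * (S2 (i+1) (m+1) : ℂ)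
          / ((i+1).factorial : ℂ))
      = ((-1 : ℂ) ^ (m + (i+1) + 1) / ((m + 1 : ℕ) : ℂ) ^ k * ((m + 1).factorial : ℂ)
          * (S2 (i+1) (m + 1) : ℂ)) / ((i+1).factorial : ℂ) := by
    intro m _
    rw [show (i+1)+(m+1) = m + (i+1) + 1 from by omega]
    ring
  rw [Finset.sum_congr rfl hinner, ← Finset.sum_div]
  rw [Nat.cast_choose ℂ hle]
  have h1 : (((i+1).factorial : ℂ)) ≠ 0 := Nat.cast_ne_zero.2 (Nat.factorial_ne_zero _)
  have h2 : (((n-(i+1)).factorial : ℂ)) ≠ 0 := Nat.cast_ne_zero.2 (Nat.factorial_ne_zero _)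
  have h3 : ((n.factorial : ℂ)) ≠ 0 := Nat.cast_ne_zero.2 (Nat.factorial_ne_zero _)
  field_simp
end

section
/- For all n ≥ 1 and k ∈ ℤ, the difference of degenerate poly-Bernoulli polynomials satisfies β_n^{(k)}(x+1|λ) − β_n^{(k)}(x|λ) = Σ_{p=1}^{n} ( Σ_{m=0}^{p−1} ((−1)^{m+p+1}/(m+1)^k) (m+1)! S_2(p,m+1) ) C(n,p) (x|λ)_{n−p}. -/
open Finset

@[simp] lemma genFall_zero (lam x : ℂ) : genFall lam x 0 = 1 := by simp [genFall]

lemma genFall_succ (lam x : ℂ) (n : ℕ) :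
    genFall lam x (n + 1) = genFall lam x n * (x - (n : ℂ) * lam) := by
  simp [genFall, Finset.prod_range_succ]

lemma genFall_vander (lam x y : ℂ) :
    ∀ n : ℕ, genFall lam (x + y) n
      = ∑ j ∈ range (n + 1), (n.choose j : ℂ) * genFall lam x j * genFall lam y (n - j)
  | 0 => by simp
  | n + 1 => by
    have IH := genFall_vander lam x y n
    rw [genFall_succ, IH, Finset.sum_mul]
    have key : ∀ j ∈ range (n + 1),
        (n.choose j : ℂ) * genFall lam x j * genFall lam y (n - j) * (x + y - (n : ℂ) * lam)
          = (n.choose j : ℂ) * genFall lam x (j + 1) * genFall lam y (n - j)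
            + (n.choose j : ℂ) * genFall lam x j * genFall lam y (n - j + 1) := by
      intro j hj
      rw [Finset.mem_range] at hj
      have hj' : j ≤ n := by omega
      have hc : ((n - j : ℕ) : ℂ) = (n : ℂ) - (j : ℂ) := by
        push_cast [Nat.cast_sub hj']; ring
      rw [genFall_succ, genFall_succ, hc]
      ring
    rw [Finset.sum_congr rfl key, Finset.sum_add_distrib]
    rw [Finset.sum_range_succ' (fun i => ((n+1).choose i : ℂ) * genFall lam x i * genFall lam y (n + 1 - i))]
    have h1 : ∀ i ∈ range (n + 1),
        (((n+1).choose (i+1) : ℕ) : ℂ) * genFall lam x (i+1) * genFall lam y (n + 1 - (i+1))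
          = (n.choose i : ℂ) * genFall lam x (i+1) * genFall lam y (n - i)
            + (n.choose (i+1) : ℂ) * genFall lam x (i+1) * genFall lam y (n - i) := by
      intro i hi
      have : n + 1 - (i + 1) = n - i := by omega
      rw [this, Nat.choose_succ_succ]
      push_cast
      ring
    rw [Finset.sum_congr rfl h1, Finset.sum_add_distrib]
    have h2 : ∑ i ∈ range (n + 1), (n.choose (i+1) : ℂ) * genFall lam x (i+1) * genFall lam y (n - i)
        = ∑ j ∈ range (n + 1), (n.choose j : ℂ) * genFall lam x j * genFall lam y (n - j + 1)
          - genFall lam y (n + 1) := by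
      rw [Finset.sum_range_succ' (fun j => (n.choose j : ℂ) * genFall lam x j * genFall lam y (n - j + 1))]
      rw [Finset.sum_range_succ]
      have hz : (n.choose (n+1) : ℂ) = 0 := by
        simp [Nat.choose_eq_zero_of_lt]
      rw [hz]
      have h3 : ∀ i ∈ range n, (n.choose (i+1) : ℂ) * genFall lam x (i+1) * genFall lam y (n - (i+1) + 1)
          = (n.choose (i+1) : ℂ) * genFall lam x (i+1) * genFall lam y (n - i) := by
        intro i hi
        rw [Finset.mem_range] at hi
        have : n - (i+1) + 1 = n - i := by omega
        rw [this]
      rw [Finset.sum_congr rfl h3]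
      simp
    rw [h2]
    simp
    ring

@[simp] lemma S2_zero_succ (m : ℕ) : S2 0 (m + 1) = 0 := rfl
@[simp] lemma S2_succ_zero (p : ℕ) : S2 (p + 1) 0 = 0 := rfl
@[simp] lemma S2_zero_zero : S2 0 0 = 1 := rfl

lemma derivative_oneSubExpNeg :
    PowerSeries.derivative ℂ oneSubExpNeg = 1 - oneSubExpNeg := by
  ext n
  rw [PowerSeries.coeff_derivative]
  simp only [oneSubExpNeg, map_sub, PowerSeries.coeff_mk, PowerSeries.coeff_one]
  have h1 : ((n+1 : ℕ).factorial : ℂ) = (n+1) * (n.factorial : ℂ) := by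
    push_cast [Nat.factorial_succ]; ring
  have h2 : (n.factorial : ℂ) ≠ 0 := Nat.cast_ne_zero.mpr n.factorial_ne_zero
  have h3 : ((n:ℂ) + 1) ≠ 0 := by
    have : ((n+1 : ℕ) : ℂ) ≠ 0 := Nat.cast_ne_zero.mpr (by omega)
    push_cast at this; exact this
  cases n with
  | zero => simp [Nat.factorial]
  | succ m =>
    rw [if_neg (by omega : ¬ (m + 1 + 1 = 0)), if_neg (by omega : ¬ (m + 1 = 0))]
    have h4 : ((m+1:ℕ) : ℂ) + 1 ≠ 0 := by
      have e : ((m+1:ℕ) : ℂ) + 1 = ((m+2 : ℕ) : ℂ) := by push_cast; ring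
      rw [e]; exact Nat.cast_ne_zero.mpr (by omega)
    rw [h1, div_mul_eq_mul_div, mul_comm (-(-1:ℂ)^(m+1+1)) _, mul_div_mul_left _ _ h4,
      pow_succ, if_neg (by omega : ¬ (m + 1 = 0))]
    ring

lemma coeff_oneSubExpNeg_pow (m : ℕ) : ∀ p : ℕ,
    PowerSeries.coeff p (oneSubExpNeg ^ m)
      = (-1 : ℂ) ^ (p + m) * (m.factorial : ℂ) * (S2 p m : ℂ) / (p.factorial : ℂ) := by
  induction m with
  | zero =>
    intro p
    cases p with
    | zero => simp
    | succ q =>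
      rw [pow_zero, PowerSeries.coeff_one, if_neg (Nat.succ_ne_zero q)]
      simp
  | succ m IH =>
    have hD : PowerSeries.derivative ℂ (oneSubExpNeg ^ (m+1))
        = (m+1) • (oneSubExpNeg ^ m - oneSubExpNeg ^ (m+1)) := by
      rw [Derivation.leibniz_pow, derivative_oneSubExpNeg]
      simp only [Nat.add_sub_cancel, smul_eq_mul, mul_one_sub, ← pow_succ]
    intro p
    induction p with
    | zero =>
      have h0 : PowerSeries.constantCoeff (oneSubExpNeg ^ (m+1)) = 0 := by
        rw [map_pow]
        have : PowerSeries.constantCoeff oneSubExpNeg = 0 := by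
          simp [oneSubExpNeg]
        rw [this, zero_pow (Nat.succ_ne_zero m)]
      rw [PowerSeries.coeff_zero_eq_constantCoeff, h0]
      simp
    | succ p IHp =>
      have hc := congrArg (PowerSeries.coeff p) hD
      rw [PowerSeries.coeff_derivative, map_nsmul, map_sub, IH p, IHp, nsmul_eq_mul] at hc
      have hp1 : ((p : ℂ) + 1) ≠ 0 := by
        have e : ((p : ℂ)) + 1 = ((p+1 : ℕ) : ℂ) := by push_cast; ring
        rw [e]; exact Nat.cast_ne_zero.mpr (by omega)
      have hpf : ((p.factorial : ℕ) : ℂ) ≠ 0 := Nat.cast_ne_zero.mpr p.factorial_ne_zero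
      have hfac : (((p+1).factorial : ℕ) : ℂ) = ((p:ℂ)+1) * (p.factorial : ℂ) := by
        rw [Nat.factorial_succ]; push_cast; ring
      have hmf : (((m+1).factorial : ℕ) : ℂ) = ((m:ℂ)+1) * (m.factorial : ℂ) := by
        rw [Nat.factorial_succ]; push_cast; ring
      have hrec : ((S2 (p+1) (m+1) : ℕ) : ℂ)
          = ((m:ℂ)+1) * (S2 p (m+1) : ℂ) + (S2 p m : ℂ) := by
        show (((m+1) * S2 p (m+1) + S2 p m : ℕ) : ℂ) = _
        push_cast; ring
      have hX : PowerSeries.coeff (p+1) (oneSubExpNeg ^ (m+1))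
          = (((m:ℕ)+1 : ℕ) : ℂ) * ((-1:ℂ)^(p+m) * (m.factorial) * (S2 p m) / p.factorial
              - (-1:ℂ)^(p+(m+1)) * ((m+1).factorial) * (S2 p (m+1)) / p.factorial) / ((p:ℂ)+1) := by
        rw [eq_div_iff hp1]; exact hc
      rw [hX, hrec, hfac, hmf]
      push_cast
      have hpow1 : (-1:ℂ)^(p+(m+1)) = (-1)^(p+m) * (-1) := by rw [← pow_succ]; ring_nf
      have hpow2 : (-1:ℂ)^(p+1+(m+1)) = (-1)^(p+m) := by
        have : p+1+(m+1) = (p+m) + 2 := by omega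
        rw [this, pow_add]; norm_num
      rw [hpow1, hpow2]
      field_simp
      ring

lemma sum_Icc_one_s11 {M : Type*} [AddCommMonoid M] (p : ℕ) (f : ℕ → M) :
    ∑ j ∈ Icc 1 p, f j = ∑ m ∈ range p, f (m + 1) := by
  rw [← Finset.Ico_add_one_right_eq_Icc, Finset.sum_Ico_eq_sum_range]
  simp [add_comm]

lemma degExp_add_one (lam x : ℂ) : degExp lam (x + 1) = degExp lam x * degExp lam 1 := by
  ext n
  rw [PowerSeries.coeff_mul, Finset.Nat.sum_antidiagonal_eq_sum_range_succ_mk]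
  simp only [degExp, PowerSeries.coeff_mk]
  rw [genFall_vander lam x 1 n, Finset.sum_div]
  refine Finset.sum_congr rfl fun j hj => ?_
  rw [Finset.mem_range] at hj
  have hj' : j ≤ n := by omega
  rw [Nat.cast_choose ℂ hj']
  have h1 : (n.factorial : ℂ) ≠ 0 := Nat.cast_ne_zero.mpr n.factorial_ne_zero
  have h2 : (j.factorial : ℂ) ≠ 0 := Nat.cast_ne_zero.mpr j.factorial_ne_zero
  have h3 : ((n-j).factorial : ℂ) ≠ 0 := Nat.cast_ne_zero.mpr (n-j).factorial_ne_zero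
  field_simp

/-- for `n ≥ 1`, `βₙ⁽ᵏ⁾(x+1|λ) − βₙ⁽ᵏ⁾(x|λ) = Σ_{p=1}^{n}
(Σ_{m=0}^{p−1} ((−1)^{m+p+1}/(m+1)ᵏ)(m+1)! S₂(p,m+1)) C(n,p) (x|λ)_{n−p}`. -/
theorem degenerate_poly_bernoulli_difference (k : ℤ) (lam : ℂ) (βk : ℕ → ℂ → ℂ)
    (hβk : ∀ x : ℂ,
      (PowerSeries.mk fun n => βk n x / (n.factorial : ℂ)) * (degExp lam 1 - 1)
        = polyLogComp k * degExp lam x)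
    (n : ℕ) (hn : 1 ≤ n) (x : ℂ) :
    βk n (x + 1) - βk n x = ∑ p ∈ Finset.Icc 1 n,
      (∑ m ∈ Finset.range p,
        (-1 : ℂ) ^ (m + p + 1) / ((m + 1 : ℕ) : ℂ) ^ k * ((m + 1).factorial : ℂ)
          * (S2 p (m + 1) : ℂ))
        * (n.choose p : ℂ) * genFall lam x (n - p) := by
  -- notation
  set A : ℕ → ℂ := fun p => ∑ m ∈ Finset.range p,
      (-1 : ℂ) ^ (m + p + 1) / ((m + 1 : ℕ) : ℂ) ^ k * ((m + 1).factorial : ℂ)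
        * (S2 p (m + 1) : ℂ) with hA
  -- coefficient of polyLogComp
  have hcoeffP : ∀ p : ℕ, PowerSeries.coeff p (polyLogComp k) = A p / (p.factorial : ℂ) := by
    intro p
    rw [polyLogComp, PowerSeries.coeff_mk, sum_Icc_one_s11, hA, Finset.sum_div]
    refine Finset.sum_congr rfl fun m hm => ?_
    rw [coeff_oneSubExpNeg_pow]
    have he : p + (m + 1) = m + p + 1 := by omega
    rw [he]
    have hz : ((m + 1 : ℕ) : ℂ) ^ k ≠ 0 :=
      zpow_ne_zero _ (Nat.cast_ne_zero.mpr (by omega))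
    have hpf : (p.factorial : ℂ) ≠ 0 := Nat.cast_ne_zero.mpr p.factorial_ne_zero
    field_simp
  -- cancel (degExp lam 1 - 1)
  have hne : degExp lam 1 - 1 ≠ 0 := by
    intro h
    have := congrArg (PowerSeries.coeff 1) h
    rw [map_sub] at this
    simp only [degExp, PowerSeries.coeff_mk, PowerSeries.coeff_one, map_zero] at this
    rw [genFall_succ, genFall_zero] at this
    norm_num at this
  have key : (PowerSeries.mk fun m => βk m (x+1) / (m.factorial : ℂ))
      - (PowerSeries.mk fun m => βk m x / (m.factorial : ℂ))
      = polyLogComp k * degExp lam x := by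
    apply mul_right_cancel₀ hne
    rw [sub_mul, hβk (x+1), hβk x, degExp_add_one]
    ring
  have hco := congrArg (PowerSeries.coeff n) key
  rw [map_sub, PowerSeries.coeff_mk, PowerSeries.coeff_mk, PowerSeries.coeff_mul,
    Finset.Nat.sum_antidiagonal_eq_sum_range_succ_mk] at hco
  have hnf : (n.factorial : ℂ) ≠ 0 := Nat.cast_ne_zero.mpr n.factorial_ne_zero
  have hmain : βk n (x + 1) - βk n x
      = (∑ p ∈ range (n+1), PowerSeries.coeff p (polyLogComp k)
          * PowerSeries.coeff (n - p) (degExp lam x)) * (n.factorial : ℂ) := by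
    rw [← hco]; field_simp
  rw [hmain, Finset.sum_range_succ' (fun p => PowerSeries.coeff p (polyLogComp k)
      * PowerSeries.coeff (n - p) (degExp lam x))]
  have h0 : PowerSeries.coeff 0 (polyLogComp k) = 0 := by
    rw [polyLogComp, PowerSeries.coeff_mk]; simp
  rw [h0, zero_mul, add_zero, sum_Icc_one_s11, Finset.sum_mul]
  refine Finset.sum_congr rfl fun i hi => ?_
  rw [Finset.mem_range] at hi
  have hip : i + 1 ≤ n := by omega
  have h2 : ((i+1).factorial : ℂ) ≠ 0 := Nat.cast_ne_zero.mpr (i+1).factorial_ne_zero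
  have h3 : ((n-(i+1)).factorial : ℂ) ≠ 0 := Nat.cast_ne_zero.mpr (n-(i+1)).factorial_ne_zero
  have hterm : ∀ a g : ℂ,
      a / ((i+1).factorial : ℂ) * (g / ((n-(i+1)).factorial : ℂ)) * (n.factorial : ℂ)
        = a * (n.choose (i+1) : ℂ) * g := by
    intro a g
    rw [Nat.cast_choose ℂ hip]
    field_simp
  rw [hcoeffP]
  simp only [degExp, PowerSeries.coeff_mk]
  exact hterm (A (i+1)) (genFall lam x (n - (i+1)))
end

section
/- The generating function identity (1/d) Σ_{a=0}^{d−1} (dt/((1+λt)^{d/λ}−1)) (1+λt)^{(a+x)/λ} = t/((1+λt)^{1/λ}−1) · (1+λt)^{x/λ} holds for every positive integer d; consequently, as exponential generating function coefficients, Σ_{a=0}^{d−1} d^{n−1} β_n((a+x)/d | λ/d) = β_n(x|λ) for all n ≥ 0. -/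
open Finset

/-- Chu–Vandermonde convolution for the generalized falling factorial. -/
lemma genFall_add (lam a b : ℂ) (n : ℕ) :
    genFall lam (a + b) n
      = ∑ k ∈ Finset.range (n + 1),
          (n.choose k : ℂ) * (genFall lam a k * genFall lam b (n - k)) := by
  induction n with
  | zero => simp [genFall]
  | succ n ih =>
    have key : ∀ k ∈ Finset.range (n + 1),
        (n.choose k : ℂ) * (genFall lam a k * genFall lam b (n - k)) * (a + b - (n : ℂ) * lam)
          = (n.choose k : ℂ) * (genFall lam a (k + 1) * genFall lam b (n - k))
            + (n.choose k : ℂ) * (genFall lam a k * genFall lam b (n + 1 - k)) := by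
      intro k hk
      rw [Finset.mem_range, Nat.lt_succ_iff] at hk
      have h1 : n + 1 - k = (n - k) + 1 := by omega
      have h2 : ((n - k : ℕ) : ℂ) = (n : ℂ) - (k : ℂ) := by rw [Nat.cast_sub hk]
      rw [h1, genFall_succ, genFall_succ, h2]
      ring
    have hS2 : ∑ k ∈ Finset.range (n + 1),
          (n.choose k : ℂ) * (genFall lam a k * genFall lam b (n + 1 - k))
        = (∑ k ∈ Finset.range (n + 1),
            (n.choose (k + 1) : ℂ) * (genFall lam a (k + 1) * genFall lam b (n - k)))
          + ((n + 1).choose 0 : ℂ) * (genFall lam a 0 * genFall lam b (n + 1 - 0)) := by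
      rw [Finset.sum_range_succ' (fun k =>
        (n.choose k : ℂ) * (genFall lam a k * genFall lam b (n + 1 - k))) n]
      rw [Finset.sum_range_succ (fun k =>
        (n.choose (k + 1) : ℂ) * (genFall lam a (k + 1) * genFall lam b (n - k))) n]
      simp only [Nat.succ_sub_succ, Nat.choose_succ_self, Nat.cast_zero, zero_mul, add_zero,
        Nat.choose_zero_right, Nat.cast_one, Nat.sub_zero, Nat.sub_self]
    calc genFall lam (a + b) (n + 1)
        = (∑ k ∈ Finset.range (n + 1),
            (n.choose k : ℂ) * (genFall lam a k * genFall lam b (n - k)))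
              * (a + b - (n : ℂ) * lam) := by rw [genFall_succ, ih]
      _ = ∑ k ∈ Finset.range (n + 1),
            ((n.choose k : ℂ) * (genFall lam a (k + 1) * genFall lam b (n - k))
              + (n.choose k : ℂ) * (genFall lam a k * genFall lam b (n + 1 - k))) := by
          rw [Finset.sum_mul]; exact Finset.sum_congr rfl key
      _ = (∑ k ∈ Finset.range (n + 1),
            (n.choose k : ℂ) * (genFall lam a (k + 1) * genFall lam b (n - k)))
          + ∑ k ∈ Finset.range (n + 1),
            (n.choose k : ℂ) * (genFall lam a k * genFall lam b (n + 1 - k)) := by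
          rw [Finset.sum_add_distrib]
      _ = ∑ k ∈ Finset.range (n + 1 + 1),
            ((n + 1).choose k : ℂ) * (genFall lam a k * genFall lam b (n + 1 - k)) := by
          rw [Finset.sum_range_succ' (fun k =>
            ((n + 1).choose k : ℂ) * (genFall lam a k * genFall lam b (n + 1 - k))) (n + 1)]
          rw [hS2]
          have e1 : ∀ k ∈ Finset.range (n + 1),
              ((n + 1).choose (k + 1) : ℂ)
                  * (genFall lam a (k + 1) * genFall lam b (n + 1 - (k + 1)))
                = (n.choose k : ℂ) * (genFall lam a (k + 1) * genFall lam b (n - k))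
                  + (n.choose (k + 1) : ℂ) * (genFall lam a (k + 1) * genFall lam b (n - k)) := by
            intro k _
            rw [Nat.succ_sub_succ, Nat.choose_succ_succ]
            push_cast
            ring
          rw [Finset.sum_congr rfl e1, Finset.sum_add_distrib]
          ring

/-- Multiplicativity of the degenerate exponential: `(1+λt)^{a/λ}·(1+λt)^{b/λ} = (1+λt)^{(a+b)/λ}`. -/
lemma degExp_mul (lam a b : ℂ) : degExp lam a * degExp lam b = degExp lam (a + b) := by
  ext n
  rw [PowerSeries.coeff_mul, Finset.Nat.sum_antidiagonal_eq_sum_range_succ_mk]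
  simp only [degExp, PowerSeries.coeff_mk]
  rw [genFall_add, Finset.sum_div]
  refine Finset.sum_congr rfl fun k hk => ?_
  rw [Finset.mem_range, Nat.lt_succ_iff] at hk
  have hc : ((n.choose k : ℕ) : ℂ) * (k.factorial : ℂ) * ((n - k).factorial : ℂ)
      = (n.factorial : ℂ) := by exact_mod_cast Nat.choose_mul_factorial_mul_factorial hk
  have h1 : (k.factorial : ℂ) ≠ 0 := Nat.cast_ne_zero.2 k.factorial_ne_zero
  have h2 : ((n - k).factorial : ℂ) ≠ 0 := Nat.cast_ne_zero.2 (n - k).factorial_ne_zero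
  have h3 : (n.factorial : ℂ) ≠ 0 := Nat.cast_ne_zero.2 n.factorial_ne_zero
  rw [div_mul_div_comm, div_eq_div_iff (mul_ne_zero h1 h2) h3]
  linear_combination -(genFall lam a k * genFall lam b (n - k)) * hc

lemma rescale_degExp (lam z : ℂ) (c : ℂ) (hc : c ≠ 0) :
    PowerSeries.rescale c (degExp (lam / c) z) = degExp lam (c * z) := by
  ext n
  rw [PowerSeries.coeff_rescale]
  simp only [degExp, PowerSeries.coeff_mk]
  rw [← mul_div_assoc]
  congr 1
  have h : c ^ n = ∏ _i ∈ Finset.range n, c := by simp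
  simp only [genFall]
  rw [h, ← Finset.prod_mul_distrib]
  refine Finset.prod_congr rfl fun i _ => ?_
  field_simp

lemma rescale_X (c : ℂ) :
    PowerSeries.rescale c (PowerSeries.X : PowerSeries ℂ) = PowerSeries.C c * PowerSeries.X := by
  ext n
  rw [PowerSeries.coeff_rescale, PowerSeries.coeff_C_mul, PowerSeries.coeff_X]
  by_cases h : n = 1 <;> simp [h]

/-- the distribution-type generating function identity
`(1/d) Σ_{a=0}^{d−1} (dt/((1+λt)^{d/λ}−1))(1+λt)^{(a+x)/λ} = t/((1+λt)^{1/λ}−1)·(1+λt)^{x/λ}`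
(stated multiplicatively, with denominators cleared), and consequently
`Σ_{a=0}^{d−1} d^{n−1} βₙ((a+x)/d | λ/d) = βₙ(x|λ)` for all `n ≥ 0`. -/
theorem degenerate_bernoulli_distribution (lam x : ℂ) (d : ℕ) (hd : 0 < d)
    (β : ℂ → ℕ → ℂ → ℂ)
    (hβ : ∀ mu y : ℂ,
      (PowerSeries.mk fun n => β mu n y / (n.factorial : ℂ)) * (degExp mu 1 - 1)
        = PowerSeries.X * degExp mu y) :
    (∑ a ∈ Finset.range d, PowerSeries.X * degExp lam ((a : ℂ) + x) * (degExp lam 1 - 1))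
        = PowerSeries.X * degExp lam x * (degExp lam (d : ℂ) - 1) ∧
      ∀ n : ℕ, ∑ a ∈ Finset.range d,
          (d : ℂ) ^ ((n : ℤ) - 1) * β (lam / (d : ℂ)) n (((a : ℂ) + x) / (d : ℂ))
        = β lam n x := by
  have hdC : (d : ℂ) ≠ 0 := Nat.cast_ne_zero.2 hd.ne'
  -- Part 1: the generating function identity
  have hstep : ∀ a : ℕ,
      PowerSeries.X * degExp lam ((a : ℂ) + x) * (degExp lam 1 - 1)
        = PowerSeries.X * degExp lam (((a + 1 : ℕ) : ℂ) + x)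
          - PowerSeries.X * degExp lam ((a : ℂ) + x) := by
    intro a
    have hm : degExp lam ((a : ℂ) + x) * degExp lam 1 = degExp lam (((a + 1 : ℕ) : ℂ) + x) := by
      rw [degExp_mul]
      congr 1
      push_cast
      ring
    rw [mul_sub, mul_one, ← hm]
    ring
  have part1 : (∑ a ∈ Finset.range d,
      PowerSeries.X * degExp lam ((a : ℂ) + x) * (degExp lam 1 - 1))
        = PowerSeries.X * degExp lam x * (degExp lam (d : ℂ) - 1) := by
    rw [Finset.sum_congr rfl fun a _ => hstep a]
    rw [Finset.sum_range_sub (fun a : ℕ => PowerSeries.X * degExp lam ((a : ℂ) + x))]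
    have h0 : degExp lam (((0 : ℕ) : ℂ) + x) = degExp lam x := by norm_num
    have hm : degExp lam x * degExp lam (d : ℂ) = degExp lam (((d : ℕ) : ℂ) + x) := by
      rw [degExp_mul, add_comm]
    rw [h0]
    linear_combination (-PowerSeries.X : PowerSeries ℂ) * hm
  refine ⟨part1, fun n => ?_⟩
  -- Part 2: the coefficient identity
  have hE1 : degExp lam 1 - 1 ≠ 0 := by
    intro h
    have := congrArg (PowerSeries.coeff 1) h
    simp [degExp, genFall, PowerSeries.coeff_one] at this
  have hEd : degExp lam (d : ℂ) - 1 ≠ 0 := by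
    intro h
    have := congrArg (PowerSeries.coeff 1) h
    simp [degExp, genFall, PowerSeries.coeff_one, hdC] at this
  set S : ℕ → PowerSeries ℂ := fun a =>
    PowerSeries.rescale (d : ℂ)
      (PowerSeries.mk fun n => β (lam / d) n (((a : ℂ) + x) / d) / (n.factorial : ℂ)) with hS
  have hkey : ∀ a : ℕ, S a * (degExp lam (d : ℂ) - 1)
      = PowerSeries.C (d : ℂ) * (PowerSeries.X * degExp lam ((a : ℂ) + x)) := by
    intro a
    have h := congrArg (PowerSeries.rescale (d : ℂ)) (hβ (lam / d) (((a : ℂ) + x) / d))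
    rw [map_mul, map_sub, map_one, map_mul, rescale_X,
      rescale_degExp lam 1 (d : ℂ) hdC, rescale_degExp lam _ (d : ℂ) hdC] at h
    rw [mul_one] at h
    have harg : (d : ℂ) * (((a : ℂ) + x) / d) = (a : ℂ) + x := by field_simp
    rw [harg] at h
    rw [hS]
    simp only
    rw [h]
    ring
  have hsum : (∑ a ∈ Finset.range d, S a) * (degExp lam (d : ℂ) - 1)
      = PowerSeries.C (d : ℂ) *
          ∑ a ∈ Finset.range d, PowerSeries.X * degExp lam ((a : ℂ) + x) := by
    rw [Finset.sum_mul, Finset.mul_sum]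
    exact Finset.sum_congr rfl fun a _ => hkey a
  have h4 : (∑ a ∈ Finset.range d, S a) * (degExp lam 1 - 1)
      = PowerSeries.C (d : ℂ) * (PowerSeries.X * degExp lam x) := by
    apply mul_right_cancel₀ hEd
    have hp : (∑ a ∈ Finset.range d, PowerSeries.X * degExp lam ((a : ℂ) + x))
        * (degExp lam 1 - 1) = PowerSeries.X * degExp lam x * (degExp lam (d : ℂ) - 1) := by
      rw [← part1, Finset.sum_mul]
    linear_combination (degExp lam 1 - 1) * hsum + PowerSeries.C (d : ℂ) * hp
  have final : (∑ a ∈ Finset.range d, S a)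
      = PowerSeries.C (d : ℂ) * PowerSeries.mk fun n => β lam n x / (n.factorial : ℂ) := by
    apply mul_right_cancel₀ hE1
    linear_combination h4 - PowerSeries.C (d : ℂ) * hβ lam x
  have hcoef := congrArg (PowerSeries.coeff n) final
  rw [map_sum, PowerSeries.coeff_C_mul, PowerSeries.coeff_mk] at hcoef
  simp only [hS, PowerSeries.coeff_rescale, PowerSeries.coeff_mk] at hcoef
  have hfac : (n.factorial : ℂ) ≠ 0 := Nat.cast_ne_zero.2 n.factorial_ne_zero
  have h5 : ∑ a ∈ Finset.range d, (d : ℂ) ^ n * β (lam / d) n (((a : ℂ) + x) / d)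
      = (d : ℂ) * β lam n x := by
    field_simp at hcoef
    rw [← Finset.sum_div] at hcoef
    field_simp at hcoef
    exact hcoef
  calc ∑ a ∈ Finset.range d,
        (d : ℂ) ^ ((n : ℤ) - 1) * β (lam / d) n (((a : ℂ) + x) / d)
      = (∑ a ∈ Finset.range d, (d : ℂ) ^ n * β (lam / d) n (((a : ℂ) + x) / d)) * (d : ℂ)⁻¹ := by
        rw [Finset.sum_mul]
        refine Finset.sum_congr rfl fun a _ => ?_
        rw [zpow_sub_one₀ hdC, zpow_natCast]
        ring
    _ = ((d : ℂ) * β lam n x) * (d : ℂ)⁻¹ := by rw [h5]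
    _ = β lam n x := by field_simp
end
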